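/- (Proposition 1, full statement.) Let M and K be positive integers, let a_1,…,a_{K+1} ∈ ℂ^M, and let W_1,…,W_K and S be M×M complex positive semidefinite matrices such that a_k^H W_k a_k > 0 for every k ∈ {1,…,K}. Define, for each k, the rank-one reconstruction w̃_k = (a_k^H W_k a_k)^{-1/2} · (W_k a_k), W̃_k = w̃_k w̃_k^H, and S̃ = S + Σ_{k=1}^K W_k − Σ_{k=1}^K W̃_k. Then: (i) each W̃_k is positive semidefinite with rank(W̃_k) = 1; (ii) S̃ is positive semidefinite; (iii) Σ_{k=1}^K tr(W̃_k) + tr(S̃) = Σ_{k=1}^K tr(W_k) + tr(S); (iv) a_{K+1}^H (Σ_{k=1}^K W̃_k + S̃) a_{K+1} = a_{K+1}^H (Σ_{k=1}^K W_k + S) a_{K+1}; (v) for every k ∈ {1,…,K}, a_k^H W̃_k a_k = a_k^H W_k a_k and a_k^H (Σ_{l≠k} W̃_l + S̃) a_k = a_k^H (Σ_{l≠k} W_l + S) a_k. In particular the reconstruction preserves the total transmit power, the sensing beampattern gain toward a_{K+1}, and both the signal and interference-plus-sensing quadratic forms of every user. -/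

import Mathlib

open Matrix Finset
open scoped ComplexOrder

private lemma quad_vmv {n : Type*} [Fintype n] (x p q : n → ℂ) :
    star x ⬝ᵥ (vecMulVec p q *ᵥ x) = (star x ⬝ᵥ p) * (q ⬝ᵥ x) := by
  simp only [dotProduct, mulVec, vecMulVec_apply, Finset.mul_sum, Finset.sum_mul]
  rw [Finset.sum_comm]
  refine Finset.sum_congr rfl fun i _ => Finset.sum_congr rfl fun j _ => by ring

private lemma my_cs {n : Type*} [Fintype n] (u y : n → ℂ) :
    (star y ⬝ᵥ u) * (star u ⬝ᵥ y) ≤ (star u ⬝ᵥ u) * (star y ⬝ᵥ y) := by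
  let u' : EuclideanSpace ℂ n := (WithLp.equiv 2 _).symm u
  let y' : EuclideanSpace ℂ n := (WithLp.equiv 2 _).symm y
  have h1 : star u ⬝ᵥ y = (inner ℂ u' y' : ℂ) := by
    simp [u', y', dotProduct, PiLp.inner_apply, mul_comm]
  have h2 : star y ⬝ᵥ u = (inner ℂ y' u' : ℂ) := by
    simp [u', y', dotProduct, PiLp.inner_apply, mul_comm]
  have h3 : star u ⬝ᵥ u = (inner ℂ u' u' : ℂ) := by
    rw [PiLp.inner_apply]; simp [u', y', dotProduct, mul_comm, Complex.mul_conj, Complex.normSq_eq_norm_sq]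
  have h4 : star y ⬝ᵥ y = (inner ℂ y' y' : ℂ) := by
    rw [PiLp.inner_apply]; simp [u', y', dotProduct, mul_comm, Complex.mul_conj, Complex.normSq_eq_norm_sq]
  rw [h1, h2, h3, h4]
  have hz : (inner ℂ y' u' : ℂ) = starRingEnd ℂ (inner ℂ u' y') := (inner_conj_symm _ _).symm
  rw [hz, inner_self_eq_norm_sq_to_K u', inner_self_eq_norm_sq_to_K y']
  have key : ‖(inner ℂ u' y' : ℂ)‖ ≤ ‖u'‖ * ‖y'‖ := norm_inner_le_norm u' y'
  have h5 : starRingEnd ℂ (inner ℂ u' y') * (inner ℂ u' y' : ℂ)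
      = ((Complex.normSq (inner ℂ u' y' : ℂ) : ℝ) : ℂ) := by
    rw [mul_comm, Complex.mul_conj]
  rw [h5]
  have h7 : Complex.normSq (inner ℂ u' y' : ℂ) = ‖(inner ℂ u' y' : ℂ)‖ ^ 2 := by
    rw [Complex.normSq_eq_norm_sq]
  rw [h7]
  have h9 : ‖(inner ℂ u' y' : ℂ)‖ ^ 2 ≤ ‖u'‖ ^ 2 * ‖y'‖ ^ 2 := by
    have h10 := pow_le_pow_left₀ (norm_nonneg (inner ℂ u' y' : ℂ)) key 2
    rwa [mul_pow] at h10
  refine le_trans (Complex.real_le_real.mpr h9) (le_of_eq ?_)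
  push_cast
  rfl

theorem proposition_1 (M K : ℕ) (hM : 0 < M) (hK : 0 < K)
    (a : Fin K → Fin M → ℂ) (aT : Fin M → ℂ)
    (W : Fin K → Matrix (Fin M) (Fin M) ℂ) (S : Matrix (Fin M) (Fin M) ℂ)
    (hW : ∀ k, (W k).PosSemidef) (hS : S.PosSemidef)
    (hpos : ∀ k, 0 < star (a k) ⬝ᵥ (W k *ᵥ a k))
    (wt : Fin K → Fin M → ℂ)
    (hwt : ∀ k, wt k = ((star (a k) ⬝ᵥ (W k *ᵥ a k)) ^ (-(1 / 2 : ℂ))) • (W k *ᵥ a k))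
    (Wt : Fin K → Matrix (Fin M) (Fin M) ℂ)
    (hWt : ∀ k, Wt k = vecMulVec (wt k) (star (wt k)))
    (St : Matrix (Fin M) (Fin M) ℂ)
    (hSt : St = S + (∑ k, W k) - ∑ k, Wt k) :
    (∀ k, (Wt k).PosSemidef ∧ (Wt k).rank = 1) ∧
    St.PosSemidef ∧
    ((∑ k, (Wt k).trace) + St.trace = (∑ k, (W k).trace) + S.trace) ∧
    (star aT ⬝ᵥ (((∑ k, Wt k) + St) *ᵥ aT) = star aT ⬝ᵥ (((∑ k, W k) + S) *ᵥ aT)) ∧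
    (∀ k, star (a k) ⬝ᵥ (Wt k *ᵥ a k) = star (a k) ⬝ᵥ (W k *ᵥ a k) ∧
      star (a k) ⬝ᵥ (((∑ l ∈ univ.erase k, Wt l) + St) *ᵥ a k) =
        star (a k) ⬝ᵥ (((∑ l ∈ univ.erase k, W l) + S) *ᵥ a k)) := by
  -- notation
  set t : Fin K → ℂ := fun k => star (a k) ⬝ᵥ (W k *ᵥ a k) with ht
  have htne : ∀ k, t k ≠ 0 := fun k => (hpos k).ne'
  have hre : ∀ k, 0 < (t k).re ∧ (t k).im = 0 := by
    intro k
    have := (Complex.lt_def.mp (hpos k))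
    exact ⟨by simpa using this.1, by simpa using this.2.symm⟩
  have hT : ∀ k, t k = (((t k).re : ℝ) : ℂ) := fun k =>
    Complex.ext (by simp) (by simp [(hre k).2])
  -- the scalar |c|^2 = t⁻¹
  have hc : ∀ k, (t k ^ (-(1 / 2 : ℂ))) * starRingEnd ℂ (t k ^ (-(1 / 2 : ℂ))) = (t k)⁻¹ := by
    intro k
    have hr : 0 < (t k).re := (hre k).1
    have hcr : t k ^ (-(1 / 2 : ℂ)) = (((t k).re ^ (-(1 / 2 : ℝ)) : ℝ) : ℂ) := by
      conv_lhs => rw [hT k]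
      rw [Complex.ofReal_cpow hr.le]
      norm_num
    have h8 : (-(1 / 2 : ℝ)) + (-(1 / 2)) = -1 := by norm_num
    rw [hcr, Complex.conj_ofReal, ← Complex.ofReal_mul, ← Real.rpow_add hr, h8,
      Real.rpow_neg_one]
    conv_rhs => rw [hT k]
    rw [← Complex.ofReal_inv]
  -- Wt k as t⁻¹ • (W a)(W a)ᴴ
  have hscale : ∀ k, Wt k = (t k)⁻¹ • vecMulVec (W k *ᵥ a k) (star (W k *ᵥ a k)) := by
    intro k
    rw [hWt, hwt]
    ext i j
    simp only [vecMulVec_apply, Pi.smul_apply, smul_eq_mul, Matrix.smul_apply, Pi.star_apply,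
      star_mul']
    rw [← hc k]
    simp only [RCLike.star_def]
    ring
  -- star (W a) ⬝ᵥ x = star a ⬝ᵥ (W x)
  have hherm : ∀ k (x : Fin M → ℂ), star (W k *ᵥ a k) ⬝ᵥ x = star (a k) ⬝ᵥ (W k *ᵥ x) := by
    intro k x
    rw [star_mulVec, dotProduct_mulVec, (hW k).1.eq]
  -- quadratic form of Wt
  have hq : ∀ k (x : Fin M → ℂ), star x ⬝ᵥ (Wt k *ᵥ x)
      = (t k)⁻¹ * ((star x ⬝ᵥ (W k *ᵥ a k)) * (star (a k) ⬝ᵥ (W k *ᵥ x))) := by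
    intro k x
    rw [hscale k, smul_mulVec, dotProduct_smul, quad_vmv, hherm]
    simp
  -- (v) first part
  have hqa : ∀ k, star (a k) ⬝ᵥ (Wt k *ᵥ a k) = t k := by
    intro k
    rw [hq k (a k)]
    field_simp [htne k]
    rfl
  -- W k - Wt k is PSD
  have hWtherm : ∀ k, (Wt k).IsHermitian := by
    intro k
    rw [hWt]
    ext i j
    simp only [conjTranspose_apply, vecMulVec_apply, Pi.star_apply, star_mul', star_star]
    ring
  have hsub : ∀ k, (W k - Wt k).PosSemidef := by
    intro k
    refine PosSemidef.of_dotProduct_mulVec_nonneg ((hW k).1.sub (hWtherm k)) fun x => ?_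
    rw [sub_mulVec, dotProduct_sub, hq k x]
    open MatrixOrder in obtain ⟨B', hB⟩ := CStarAlgebra.nonneg_iff_eq_star_mul_self.mp (hW k).nonneg
    set B := B' with hB'
    have hBB : ∀ z x : Fin M → ℂ, star x ⬝ᵥ (W k *ᵥ z) = star (B *ᵥ x) ⬝ᵥ (B *ᵥ z) := by
      intro z x
      rw [hB, ← mulVec_mulVec, dotProduct_mulVec, star_mulVec, star_eq_conjTranspose]
    set u := B *ᵥ a k
    set y := B *ᵥ x
    have h1 : star x ⬝ᵥ (W k *ᵥ a k) = star y ⬝ᵥ u := hBB (a k) x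
    have h2 : star (a k) ⬝ᵥ (W k *ᵥ x) = star u ⬝ᵥ y := hBB x (a k)
    have h3 : star x ⬝ᵥ (W k *ᵥ x) = star y ⬝ᵥ y := hBB x x
    have h4 : t k = star u ⬝ᵥ u := hBB (a k) (a k)
    rw [h1, h2, h3]
    have hinv : 0 ≤ (t k)⁻¹ := by
      rw [hT k, ← Complex.ofReal_inv]
      exact Complex.zero_le_real.mpr (inv_nonneg.mpr (hre k).1.le)
    have cs := my_cs u y
    have step : (t k)⁻¹ * ((star y ⬝ᵥ u) * (star u ⬝ᵥ y))
        ≤ (t k)⁻¹ * ((star u ⬝ᵥ u) * (star y ⬝ᵥ y)) :=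
      mul_le_mul_of_nonneg_left cs hinv
    have heq : (t k)⁻¹ * ((star u ⬝ᵥ u) * (star y ⬝ᵥ y)) = star y ⬝ᵥ y := by
      rw [← h4, ← mul_assoc, inv_mul_cancel₀ (htne k), one_mul]
    rw [sub_nonneg]
    calc (t k)⁻¹ * ((star y ⬝ᵥ u) * (star u ⬝ᵥ y))
        ≤ (t k)⁻¹ * ((star u ⬝ᵥ u) * (star y ⬝ᵥ y)) := step
      _ = star y ⬝ᵥ y := heq
  -- Wt PSD
  have hWtpsd : ∀ k, (Wt k).PosSemidef := by
    intro k
    refine PosSemidef.of_dotProduct_mulVec_nonneg (hWtherm k) fun x => ?_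
    rw [hWt, quad_vmv, star_dotProduct]
    exact star_mul_self_nonneg _
  -- wt k ≠ 0
  have hwne : ∀ k, wt k ≠ 0 := by
    intro k h
    apply htne k
    rw [← hqa k, hWt, h]
    simp [vecMulVec, mulVec, dotProduct]
  -- rank Wt k = 1
  have hrank : ∀ k, (Wt k).rank = 1 := by
    intro k
    refine le_antisymm ?_ ?_
    · rw [hWt, vecMulVec_eq (Fin 1)]
      exact le_trans (rank_mul_le_left _ _)
        ((rank_le_card_width (replicateCol (Fin 1) (wt k))).trans (by simp))
    · rw [Nat.one_le_iff_ne_zero, ← Nat.pos_iff_ne_zero, Matrix.rank]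
      rw [Module.finrank_pos_iff_exists_ne_zero]
      have hmv : Wt k *ᵥ wt k = (star (wt k) ⬝ᵥ wt k) • wt k := by
        rw [hWt]
        ext i
        simp only [mulVec, vecMulVec_apply, dotProduct, Pi.smul_apply, smul_eq_mul,
          Finset.mul_sum, Finset.sum_mul, Pi.star_apply]
        refine Finset.sum_congr rfl fun j _ => by ring
      have hne : Wt k *ᵥ wt k ≠ 0 := by
        rw [hmv]
        exact smul_ne_zero (fun h => hwne k (dotProduct_star_self_eq_zero.mp h)) (hwne k)
      refine ⟨⟨Wt k *ᵥ wt k, LinearMap.mem_range.mpr ⟨wt k, by simp [mulVecLin_apply]⟩⟩, ?_⟩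
      intro h
      exact hne (congrArg Subtype.val h)
  -- St PSD
  have hStdecomp : St = S + ∑ k, (W k - Wt k) := by
    rw [hSt, Finset.sum_sub_distrib]
    abel
  have hStpsd : St.PosSemidef := by
    rw [hStdecomp]
    refine hS.add (Finset.sum_induction _ _ (fun A B hA hB => hA.add hB)
      Matrix.PosSemidef.zero (fun k _ => hsub k))
  refine ⟨fun k => ⟨hWtpsd k, hrank k⟩, hStpsd, ?_, ?_, fun k => ⟨hqa k, ?_⟩⟩
  · rw [hSt, trace_sub, trace_add, trace_sum, trace_sum]
    ring
  · have hmat : (∑ k, Wt k) + St = (∑ k, W k) + S := by rw [hSt]; abel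
    rw [hmat]
  · have hmat : (∑ l ∈ univ.erase k, Wt l) + St
        = ((∑ l ∈ univ.erase k, W l) + S) + (W k - Wt k) := by
      rw [Finset.sum_erase_eq_sub (mem_univ k), Finset.sum_erase_eq_sub (mem_univ k), hSt]
      abel
    rw [hmat, add_mulVec, dotProduct_add, sub_mulVec, dotProduct_sub, hqa k]
    simp
    exact sub_self _
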